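/- The Shepard operator R_n with exponent p = 2 is continuously differentiable on (−1,1) and satisfies R_n′(f, j/n) = 0 at every interior node j/n, for every f : [−1,1] → ℝ (Hermite–Fejér type behavior). -/

import Mathlib

open Real Classical

/-- The Shepard operator with exponent `p = 2` on `[-1,1]`, based on the
equidistant nodes `k/n`, `|k| ≤ n`, extended by the node values of `f`. -/
noncomputable def shepard2 (n : ℕ) (f : ℝ → ℝ) (x : ℝ) : ℝ :=
  if ∃ j : ℤ, |j| ≤ (n : ℤ) ∧ x = (j : ℝ) / n then f x
  else (∑ k ∈ Finset.Icc (-(n : ℤ)) (n : ℤ), f ((k : ℝ) / n) * ((x - (k : ℝ) / n) ^ 2)⁻¹) /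
    (∑ k ∈ Finset.Icc (-(n : ℤ)) (n : ℤ), ((x - (k : ℝ) / n) ^ 2)⁻¹)

/-- Auxiliary: the "deleted" product `∏_{m ≠ k} (x - m/n)^2`. -/
noncomputable def shepQ (n : ℕ) (k : ℤ) (x : ℝ) : ℝ :=
  ∏ m ∈ (Finset.Icc (-(n : ℤ)) (n : ℤ)).erase k, (x - (m : ℝ) / n) ^ 2

/-- Polynomial numerator. -/
noncomputable def shepN (n : ℕ) (f : ℝ → ℝ) (x : ℝ) : ℝ :=
  ∑ k ∈ Finset.Icc (-(n : ℤ)) (n : ℤ), f ((k : ℝ) / n) * shepQ n k x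

/-- Polynomial denominator. -/
noncomputable def shepD (n : ℕ) (x : ℝ) : ℝ :=
  ∑ k ∈ Finset.Icc (-(n : ℤ)) (n : ℤ), shepQ n k x

lemma shep_node_ne {n : ℕ} (hn : 1 ≤ n) {m k : ℤ} (h : m ≠ k) :
    (m : ℝ) / n ≠ (k : ℝ) / n := by
  have hn0 : (n : ℝ) ≠ 0 := Nat.cast_ne_zero.mpr (by omega)
  intro he
  apply h
  field_simp at he
  exact_mod_cast he

lemma shepQ_contDiff (n : ℕ) (k : ℤ) : ContDiff ℝ 1 (shepQ n k) := by
  apply contDiff_prod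
  intro m _
  exact (contDiff_id.sub contDiff_const).pow 2

lemma shepQ_eq_zero {n : ℕ} {k j : ℤ} (hj : j ∈ Finset.Icc (-(n : ℤ)) (n : ℤ))
    (hkj : k ≠ j) : shepQ n k ((j : ℝ) / n) = 0 := by
  apply Finset.prod_eq_zero (i := j) (Finset.mem_erase.mpr ⟨Ne.symm hkj, hj⟩)
  simp

lemma shepQ_pos {n : ℕ} (hn : 1 ≤ n) (j : ℤ) : 0 < shepQ n j ((j : ℝ) / n) := by
  apply Finset.prod_pos
  intro m hm
  have hm' : m ≠ j := (Finset.mem_erase.mp hm).1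
  have : (j : ℝ) / n - (m : ℝ) / n ≠ 0 := sub_ne_zero.mpr (shep_node_ne hn (Ne.symm hm'))
  positivity

lemma shepD_pos {n : ℕ} (hn : 1 ≤ n) (x : ℝ) : 0 < shepD n x := by
  apply Finset.sum_pos'
  · intro k _; exact Finset.prod_nonneg fun m _ => sq_nonneg _
  · by_cases h : ∃ j : ℤ, j ∈ Finset.Icc (-(n : ℤ)) (n : ℤ) ∧ x = (j : ℝ) / n
    · obtain ⟨j, hj, rfl⟩ := h
      exact ⟨j, hj, shepQ_pos hn j⟩
    · push_neg at h
      refine ⟨0, by simp, Finset.prod_pos fun m hm => ?_⟩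
      have : x ≠ (m : ℝ) / n := h m (Finset.mem_erase.mp hm).2
      have := sub_ne_zero.mpr this
      positivity

lemma shepard2_eq {n : ℕ} (hn : 1 ≤ n) (f : ℝ → ℝ) :
    shepard2 n f = fun x => shepN n f x / shepD n x := by
  funext x
  unfold shepard2 shepN shepD
  split_ifs with h
  · obtain ⟨j, hj, rfl⟩ := h
    have hjmem : j ∈ Finset.Icc (-(n : ℤ)) (n : ℤ) := by
      rw [Finset.mem_Icc]; rw [abs_le] at hj; exact hj
    have hN : ∑ k ∈ Finset.Icc (-(n : ℤ)) (n : ℤ),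
        f ((k : ℝ) / n) * shepQ n k ((j : ℝ) / n)
        = f ((j : ℝ) / n) * shepQ n j ((j : ℝ) / n) := by
      refine Finset.sum_eq_single_of_mem j hjmem fun k hk hkj => ?_
      rw [shepQ_eq_zero hjmem hkj, mul_zero]
    have hD : ∑ k ∈ Finset.Icc (-(n : ℤ)) (n : ℤ), shepQ n k ((j : ℝ) / n)
        = shepQ n j ((j : ℝ) / n) := by
      refine Finset.sum_eq_single_of_mem j hjmem fun k hk hkj => shepQ_eq_zero hjmem hkj
    rw [hN, hD, mul_div_assoc, div_self (shepQ_pos hn j).ne', mul_one]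
  · push_neg at h
    have hx : ∀ k ∈ Finset.Icc (-(n : ℤ)) (n : ℤ), x - (k : ℝ) / n ≠ 0 := by
      intro k hk
      rw [Finset.mem_Icc] at hk
      exact sub_ne_zero.mpr (h k (abs_le.mpr hk))
    set P : ℝ := ∏ m ∈ Finset.Icc (-(n : ℤ)) (n : ℤ), (x - (m : ℝ) / n) ^ 2 with hP
    have hPne : P ≠ 0 := Finset.prod_ne_zero_iff.mpr fun m hm => pow_ne_zero 2 (hx m hm)
    have hQ : ∀ k ∈ Finset.Icc (-(n : ℤ)) (n : ℤ),
        shepQ n k x = P * ((x - (k : ℝ) / n) ^ 2)⁻¹ := by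
      intro k hk
      rw [eq_mul_inv_iff_mul_eq₀ (pow_ne_zero 2 (hx k hk)), mul_comm, hP]
      exact Finset.mul_prod_erase _ (fun m : ℤ => (x - (m : ℝ) / n) ^ 2) hk
    have h1 : ∑ k ∈ Finset.Icc (-(n : ℤ)) (n : ℤ), f ((k : ℝ) / n) * shepQ n k x
        = P * ∑ k ∈ Finset.Icc (-(n : ℤ)) (n : ℤ),
          f ((k : ℝ) / n) * ((x - (k : ℝ) / n) ^ 2)⁻¹ := by
      rw [Finset.mul_sum]
      exact Finset.sum_congr rfl fun k hk => by rw [hQ k hk]; ring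
    have h2 : ∑ k ∈ Finset.Icc (-(n : ℤ)) (n : ℤ), shepQ n k x
        = P * ∑ k ∈ Finset.Icc (-(n : ℤ)) (n : ℤ), ((x - (k : ℝ) / n) ^ 2)⁻¹ := by
      rw [Finset.mul_sum]
      exact Finset.sum_congr rfl fun k hk => hQ k hk
    rw [h1, h2, mul_div_mul_left _ _ hPne]

lemma shepN_contDiff (n : ℕ) (f : ℝ → ℝ) : ContDiff ℝ 1 (shepN n f) :=
  ContDiff.sum fun k _ => (contDiff_const).mul (shepQ_contDiff n k)

lemma shepD_contDiff (n : ℕ) : ContDiff ℝ 1 (shepD n) :=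
  ContDiff.sum fun k _ => shepQ_contDiff n k

lemma shepQ_hasDerivAt_zero {n : ℕ} {k j : ℤ}
    (hj : j ∈ Finset.Icc (-(n : ℤ)) (n : ℤ)) (hkj : k ≠ j) :
    HasDerivAt (shepQ n k) 0 ((j : ℝ) / n) := by
  have hjmem : j ∈ (Finset.Icc (-(n : ℤ)) (n : ℤ)).erase k :=
    Finset.mem_erase.mpr ⟨Ne.symm hkj, hj⟩
  have hfa : shepQ n k = fun x => (x - (j : ℝ) / n) ^ 2 *
      ∏ m ∈ ((Finset.Icc (-(n : ℤ)) (n : ℤ)).erase k).erase j, (x - (m : ℝ) / n) ^ 2 := by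
    funext x
    exact (Finset.mul_prod_erase _ _ hjmem).symm
  rw [hfa]
  set R : ℝ → ℝ := fun x =>
    ∏ m ∈ ((Finset.Icc (-(n : ℤ)) (n : ℤ)).erase k).erase j, (x - (m : ℝ) / n) ^ 2 with hR
  have hRd : DifferentiableAt ℝ R ((j : ℝ) / n) := by
    have : ContDiff ℝ 1 R :=
      contDiff_prod fun m _ => (contDiff_id.sub contDiff_const).pow 2
    exact this.differentiable one_ne_zero _
  have h1 : HasDerivAt (fun x : ℝ => (x - (j : ℝ) / n) ^ 2)
      (2 * ((j : ℝ) / n - (j : ℝ) / n) ^ 1 * 1) ((j : ℝ) / n) :=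
    ((hasDerivAt_id _).sub_const _).pow 2
  have := h1.mul hRd.hasDerivAt
  simpa [Pi.mul_def, hR] using this

theorem shepard2_deriv_zero_at_nodes (n : ℕ) (hn : 1 ≤ n) (f : ℝ → ℝ) :
    ContDiffOn ℝ 1 (shepard2 n f) (Set.Ioo (-1 : ℝ) 1) ∧
      ∀ j : ℤ, |j| ≤ (n : ℤ) → (j : ℝ) / n ∈ Set.Ioo (-1 : ℝ) 1 →
        deriv (shepard2 n f) ((j : ℝ) / n) = 0 := by
  rw [shepard2_eq hn f]
  constructor
  · exact (ContDiff.div (shepN_contDiff n f) (shepD_contDiff n)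
      fun x => (shepD_pos hn x).ne').contDiffOn
  · intro j hj _
    have hjmem : j ∈ Finset.Icc (-(n : ℤ)) (n : ℤ) := by
      rw [Finset.mem_Icc]; rw [abs_le] at hj; exact hj
    set x₀ : ℝ := (j : ℝ) / n with hx₀
    set c : ℝ := deriv (shepQ n j) x₀ with hc
    have hQd : ∀ k : ℤ, HasDerivAt (shepQ n k) (deriv (shepQ n k) x₀) x₀ := fun k =>
      (((shepQ_contDiff n k).differentiable one_ne_zero) x₀).hasDerivAt
    have hder0 : ∀ k : ℤ, k ≠ j → deriv (shepQ n k) x₀ = 0 := fun k hk =>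
      (shepQ_hasDerivAt_zero hjmem hk).deriv
    have hN : HasDerivAt (shepN n f) (f x₀ * c) x₀ := by
      have := HasDerivAt.sum (u := Finset.Icc (-(n : ℤ)) (n : ℤ))
        (A := fun k x => f ((k : ℝ) / n) * shepQ n k x)
        (A' := fun k => f ((k : ℝ) / n) * deriv (shepQ n k) x₀) (x := x₀)
        (fun k _ => (hQd k).const_mul _)
      have hs : ∑ k ∈ Finset.Icc (-(n : ℤ)) (n : ℤ),
          f ((k : ℝ) / n) * deriv (shepQ n k) x₀ = f x₀ * c := by
        rw [hx₀]
        refine Finset.sum_eq_single_of_mem j hjmem fun k _ hkj => ?_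
        rw [hder0 k hkj, mul_zero]
      rw [← hs]
      rw [Finset.sum_fn] at this
      exact this
    have hD : HasDerivAt (shepD n) c x₀ := by
      have := HasDerivAt.sum (u := Finset.Icc (-(n : ℤ)) (n : ℤ))
        (A := fun k x => shepQ n k x)
        (A' := fun k => deriv (shepQ n k) x₀) (x := x₀) (fun k _ => hQd k)
      have hs : ∑ k ∈ Finset.Icc (-(n : ℤ)) (n : ℤ), deriv (shepQ n k) x₀ = c := by
        refine Finset.sum_eq_single_of_mem j hjmem fun k _ hkj => hder0 k hkj
      rw [← hs]
      rw [Finset.sum_fn] at this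
      exact this
    have hNval : shepN n f x₀ = f x₀ * shepQ n j x₀ := by
      unfold shepN
      rw [hx₀]
      exact Finset.sum_eq_single_of_mem j hjmem fun k _ hkj => by
        rw [shepQ_eq_zero hjmem hkj, mul_zero]
    have hDval : shepD n x₀ = shepQ n j x₀ := by
      unfold shepD
      rw [hx₀]
      exact Finset.sum_eq_single_of_mem j hjmem fun k _ hkj => shepQ_eq_zero hjmem hkj
    have hdiv := hN.div hD (shepD_pos hn x₀).ne'
    rw [show (fun x => shepN n f x / shepD n x) = shepN n f / shepD n from rfl, hdiv.deriv, hNval, hDval]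
    ring
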